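/- If F ⊆ 2^[n] is shattering-extremal, then the family of sets strongly shattered by F equals the family of sets shattered by F: st(F) = Sh(F). -/
import Mathlib


open scoped symmDiff

/-- `𝓕` shatters `S`: every subset of `S` is the trace of some member of `𝓕` on `S`. -/
def Shatters {n : ℕ} (𝓕 : Finset (Finset (Fin n))) (S : Finset (Fin n)) : Prop :=
  ∀ T ⊆ S, ∃ F ∈ 𝓕, F ∩ S = T

/-- `𝓕` strongly shatters `S`: there is `I ⊆ [n] \ S` with `{H ∪ I : H ⊆ S} ⊆ 𝓕`. -/
def StronglyShatters {n : ℕ} (𝓕 : Finset (Finset (Fin n))) (S : Finset (Fin n)) : Prop :=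
  ∃ I : Finset (Fin n), I ⊆ Sᶜ ∧ ∀ H ⊆ S, H ∪ I ∈ 𝓕

open Classical in
/-- The family of subsets of `[n]` shattered by `𝓕`. -/
noncomputable def Sh {n : ℕ} (𝓕 : Finset (Finset (Fin n))) : Finset (Finset (Fin n)) :=
  Finset.univ.filter (Shatters 𝓕)

open Classical in
/-- The family of subsets of `[n]` strongly shattered by `𝓕`. -/
noncomputable def st {n : ℕ} (𝓕 : Finset (Finset (Fin n))) : Finset (Finset (Fin n)) :=
  Finset.univ.filter (StronglyShatters 𝓕)

/-- `𝓕` is shattering-extremal if it shatters exactly `|𝓕|` sets. -/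
def Extremal {n : ℕ} (𝓕 : Finset (Finset (Fin n))) : Prop :=
  (Sh 𝓕).card = 𝓕.card

/-- The Vapnik–Chervonenkis dimension: the maximum cardinality of a shattered set. -/
noncomputable def dimVC {n : ℕ} (𝓕 : Finset (Finset (Fin n))) : ℕ :=
  (Sh 𝓕).sup Finset.card

open Finset

variable {n : ℕ}

def F0 (𝓕 : Finset (Finset (Fin n))) (a : Fin n) : Finset (Finset (Fin n)) :=
  𝓕.filter (fun A => a ∉ A)

def F1 (𝓕 : Finset (Finset (Fin n))) (a : Fin n) : Finset (Finset (Fin n)) :=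
  (𝓕.filter (fun A => a ∈ A)).image (fun A => A.erase a)

lemma mem_Sh {𝓕 : Finset (Finset (Fin n))} {S} : S ∈ Sh 𝓕 ↔ _root_.Shatters 𝓕 S := by
  simp [Sh]

lemma mem_st {𝓕 : Finset (Finset (Fin n))} {S} : S ∈ st 𝓕 ↔ StronglyShatters 𝓕 S := by
  simp [st]

lemma mem_F1 {𝓕 : Finset (Finset (Fin n))} {a B} :
    B ∈ F1 𝓕 a ↔ ∃ A ∈ 𝓕, a ∈ A ∧ A.erase a = B := by
  simp [F1, Finset.mem_image, Finset.mem_filter, and_assoc]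

lemma notmem_F0 {𝓕 : Finset (Finset (Fin n))} {a A} (h : A ∈ F0 𝓕 a) : a ∉ A :=
  (Finset.mem_filter.1 h).2

lemma notmem_F1 {𝓕 : Finset (Finset (Fin n))} {a A} (h : A ∈ F1 𝓕 a) : a ∉ A := by
  obtain ⟨B, -, -, rfl⟩ := mem_F1.1 h
  exact Finset.notMem_erase _ _

lemma shatters_mono {𝓖 𝓕 : Finset (Finset (Fin n))} (h : 𝓖 ⊆ 𝓕) {S}
    (hS : _root_.Shatters 𝓖 S) : _root_.Shatters 𝓕 S := fun T hT => by
  obtain ⟨F, hF, hFS⟩ := hS T hT; exact ⟨F, h hF, hFS⟩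

lemma Sh_mono {𝓖 𝓕 : Finset (Finset (Fin n))} (h : 𝓖 ⊆ 𝓕) : Sh 𝓖 ⊆ Sh 𝓕 :=
  fun _ hS => mem_Sh.2 (shatters_mono h (mem_Sh.1 hS))

lemma exists_superset_of_shatters {𝓕 : Finset (Finset (Fin n))} {S}
    (h : _root_.Shatters 𝓕 S) : ∃ F ∈ 𝓕, S ⊆ F := by
  obtain ⟨F, hF, hFS⟩ := h S Finset.Subset.rfl
  refine ⟨F, hF, fun x hx => ?_⟩
  have : x ∈ F ∩ S := by rw [hFS]; exact hx
  exact (Finset.mem_inter.1 this).1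

lemma notmem_of_shatters {𝓖 : Finset (Finset (Fin n))} {a S}
    (h : _root_.Shatters 𝓖 S) (hG : ∀ A ∈ 𝓖, a ∉ A) : a ∉ S := by
  obtain ⟨F, hF, hSF⟩ := exists_superset_of_shatters h
  exact fun haS => hG F hF (hSF haS)

lemma shatters_union_iff {𝓕 : Finset (Finset (Fin n))} {a S} (haS : a ∉ S) :
    _root_.Shatters 𝓕 S ↔ _root_.Shatters (F0 𝓕 a ∪ F1 𝓕 a) S := by
  constructor
  · intro h T hT
    obtain ⟨F, hF, hFS⟩ := h T hT
    by_cases ha : a ∈ F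
    · refine ⟨F.erase a, Finset.mem_union_right _ (mem_F1.2 ⟨F, hF, ha, rfl⟩), ?_⟩
      rw [← hFS]
      ext x
      simp only [Finset.mem_inter, Finset.mem_erase]
      refine ⟨fun ⟨⟨_, h2⟩, h3⟩ => ⟨h2, h3⟩, fun ⟨h2, h3⟩ => ⟨⟨?_, h2⟩, h3⟩⟩
      rintro rfl; exact haS h3
    · exact ⟨F, Finset.mem_union_left _ (Finset.mem_filter.2 ⟨hF, ha⟩), hFS⟩
  · intro h T hT
    obtain ⟨B, hB, hBS⟩ := h T hT
    rcases Finset.mem_union.1 hB with hB0 | hB1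
    · exact ⟨B, (Finset.mem_filter.1 hB0).1, hBS⟩
    · obtain ⟨A, hA, haA, rfl⟩ := mem_F1.1 hB1
      refine ⟨A, hA, ?_⟩
      rw [← hBS]
      ext x
      simp only [Finset.mem_inter, Finset.mem_erase]
      refine ⟨fun ⟨h2, h3⟩ => ⟨⟨?_, h2⟩, h3⟩, fun ⟨⟨_, h2⟩, h3⟩ => ⟨h2, h3⟩⟩
      rintro rfl; exact haS h3

lemma shatters_insert_iff {𝓕 : Finset (Finset (Fin n))} {a S} (haS : a ∉ S) :
    _root_.Shatters 𝓕 (insert a S) ↔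
      _root_.Shatters (F0 𝓕 a) S ∧ _root_.Shatters (F1 𝓕 a) S := by
  constructor
  · intro h
    constructor
    · intro T hT
      obtain ⟨F, hF, hFS⟩ := h T (hT.trans (Finset.subset_insert a S))
      have haF : a ∉ F := by
        intro haF
        have : a ∈ T := by rw [← hFS]; exact Finset.mem_inter.2 ⟨haF, Finset.mem_insert_self a S⟩
        exact haS (hT this)
      refine ⟨F, Finset.mem_filter.2 ⟨hF, haF⟩, ?_⟩
      rw [← hFS]
      ext x
      simp only [Finset.mem_inter, Finset.mem_insert]
      constructor
      · exact fun ⟨h1, h2⟩ => ⟨h1, Or.inr h2⟩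
      · rintro ⟨h1, (rfl | h2)⟩
        · exact absurd h1 haF
        · exact ⟨h1, h2⟩
    · intro T hT
      obtain ⟨F, hF, hFS⟩ := h (insert a T)
        (Finset.insert_subset_insert a hT)
      have haF : a ∈ F := by
        have : a ∈ F ∩ insert a S := by
          rw [hFS]; exact Finset.mem_insert_self a T
        exact (Finset.mem_inter.1 this).1
      refine ⟨F.erase a, mem_F1.2 ⟨F, hF, haF, rfl⟩, ?_⟩
      ext x
      simp only [Finset.mem_inter, Finset.mem_erase]
      constructor
      · rintro ⟨⟨hxa, hxF⟩, hxS⟩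
        have : x ∈ insert a T := by
          rw [← hFS]; exact Finset.mem_inter.2 ⟨hxF, Finset.mem_insert_of_mem hxS⟩
        rcases Finset.mem_insert.1 this with rfl | h2
        · exact absurd rfl hxa
        · exact h2
      · intro hxT
        have hxS : x ∈ S := hT hxT
        have hxa : x ≠ a := by rintro rfl; exact haS hxS
        have : x ∈ F ∩ insert a S := by
          rw [hFS]; exact Finset.mem_insert_of_mem hxT
        exact ⟨⟨hxa, (Finset.mem_inter.1 this).1⟩, hxS⟩
  · rintro ⟨h0, h1⟩ T hT
    by_cases haT : a ∈ T
    · obtain ⟨B, hB, hBS⟩ := h1 (T.erase a) (by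
        intro x hx
        have := Finset.mem_erase.1 hx
        rcases Finset.mem_insert.1 (hT this.2) with rfl | h2
        · exact absurd rfl this.1
        · exact h2)
      obtain ⟨A, hA, haA, hAe⟩ := mem_F1.1 hB
      refine ⟨A, hA, ?_⟩
      ext x
      simp only [Finset.mem_inter, Finset.mem_insert]
      constructor
      · rintro ⟨h1', (rfl | h2)⟩
        · exact haT
        · have hxa : x ≠ a := by rintro rfl; exact haS h2
          have : x ∈ B ∩ S := Finset.mem_inter.2 ⟨by rw [← hAe]; exact Finset.mem_erase.2 ⟨hxa, h1'⟩, h2⟩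
          rw [hBS] at this
          exact (Finset.mem_erase.1 this).2
      · intro hxT
        by_cases hxa : x = a
        · subst hxa; exact ⟨haA, Or.inl rfl⟩
        · have hxB : x ∈ B ∩ S := by
            rw [hBS]; exact Finset.mem_erase.2 ⟨hxa, hxT⟩
          have := Finset.mem_inter.1 hxB
          refine ⟨?_, Or.inr this.2⟩
          rw [← hAe] at this
          exact (Finset.mem_erase.1 this.1).2
    · obtain ⟨B, hB, hBS⟩ := h0 T (fun x hx => by
        rcases Finset.mem_insert.1 (hT hx) with rfl | h2
        · exact absurd hx haT
        · exact h2)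
      have haB : a ∉ B := notmem_F0 hB
      refine ⟨B, (Finset.mem_filter.1 hB).1, ?_⟩
      rw [← hBS]
      ext x
      simp only [Finset.mem_inter, Finset.mem_insert]
      constructor
      · rintro ⟨h1', (rfl | h2)⟩
        · exact absurd h1' haB
        · exact ⟨h1', h2⟩
      · exact fun ⟨h1', h2⟩ => ⟨h1', Or.inr h2⟩

lemma card_F01 (𝓕 : Finset (Finset (Fin n))) (a : Fin n) :
    (F0 𝓕 a).card + (F1 𝓕 a).card = 𝓕.card := by
  have h1 : (F1 𝓕 a).card = (𝓕.filter (fun A => a ∈ A)).card := by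
    apply Finset.card_image_of_injOn
    intro A hA B hB hAB
    have haA : a ∈ A := (Finset.mem_filter.1 hA).2
    have haB : a ∈ B := (Finset.mem_filter.1 hB).2
    simp only at hAB
    rw [← Finset.insert_erase haA, ← Finset.insert_erase haB, hAB]
  rw [F0, h1, add_comm]
  exact Finset.card_filter_add_card_filter_not _

lemma sup_F0_subset (𝓕 : Finset (Finset (Fin n))) (a : Fin n) :
    (F0 𝓕 a).sup id ⊆ (𝓕.sup id).erase a := by
  apply Finset.sup_le (α := Finset (Fin n))
  intro A hA x hx
  exact Finset.mem_erase.2 ⟨fun h => notmem_F0 hA (h ▸ hx),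
    Finset.mem_sup.2 ⟨A, (Finset.mem_filter.1 hA).1, hx⟩⟩

lemma sup_F1_subset (𝓕 : Finset (Finset (Fin n))) (a : Fin n) :
    (F1 𝓕 a).sup id ⊆ (𝓕.sup id).erase a := by
  apply Finset.sup_le (α := Finset (Fin n))
  intro B hB x hx
  obtain ⟨A, hA, -, rfl⟩ := mem_F1.1 hB
  have := Finset.mem_erase.1 hx
  exact Finset.mem_erase.2 ⟨this.1, Finset.mem_sup.2 ⟨A, hA, this.2⟩⟩

lemma Sh_union_filter (𝓕 : Finset (Finset (Fin n))) (a : Fin n) :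
    Sh (F0 𝓕 a ∪ F1 𝓕 a) = (Sh 𝓕).filter (fun S => a ∉ S) := by
  classical
  ext S
  rw [Finset.mem_filter, mem_Sh, mem_Sh]
  constructor
  · intro h
    have haS : a ∉ S := notmem_of_shatters h (fun A hA => by
      rcases Finset.mem_union.1 hA with h' | h'
      · exact notmem_F0 h'
      · exact notmem_F1 h')
    exact ⟨(shatters_union_iff haS).2 h, haS⟩
  · exact fun ⟨h, haS⟩ => (shatters_union_iff haS).1 h

lemma sh_card_split (𝓕 : Finset (Finset (Fin n))) (a : Fin n) :
    (Sh 𝓕).card = (Sh (F0 𝓕 a ∪ F1 𝓕 a)).card + (Sh (F0 𝓕 a) ∩ Sh (F1 𝓕 a)).card := by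
  classical
  have hsplit := Finset.card_filter_add_card_filter_not
    (s := Sh 𝓕) (p := fun S => a ∉ S)
  have h2 : ((Sh 𝓕).filter (fun S => ¬ a ∉ S)).card
      = (Sh (F0 𝓕 a) ∩ Sh (F1 𝓕 a)).card := by
    have hi : ∀ S ∈ (Sh 𝓕).filter (fun S => ¬ a ∉ S),
        S.erase a ∈ Sh (F0 𝓕 a) ∩ Sh (F1 𝓕 a) := by
      intro S hS
      have hrec := Finset.mem_filter.1 hS
      have haS : a ∈ S := not_not.1 hrec.2
      have hsh : _root_.Shatters 𝓕 (insert a (S.erase a)) := by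
        rw [Finset.insert_erase haS]; exact mem_Sh.1 hrec.1
      have := (shatters_insert_iff (Finset.notMem_erase a S)).1 hsh
      exact Finset.mem_inter.2 ⟨mem_Sh.2 this.1, mem_Sh.2 this.2⟩
    have hj : ∀ S ∈ Sh (F0 𝓕 a) ∩ Sh (F1 𝓕 a),
        insert a S ∈ (Sh 𝓕).filter (fun S => ¬ a ∉ S) := by
      intro S hS
      have h' := Finset.mem_inter.1 hS
      have haS : a ∉ S := notmem_of_shatters (mem_Sh.1 h'.1) (fun A hA => notmem_F0 hA)
      refine Finset.mem_filter.2 ⟨mem_Sh.2 ?_, by simp⟩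
      exact (shatters_insert_iff haS).2 ⟨mem_Sh.1 h'.1, mem_Sh.1 h'.2⟩
    exact Finset.card_bij' (fun S _ => S.erase a) (fun S _ => insert a S) hi hj
      (fun S hS => Finset.insert_erase (not_not.1 (Finset.mem_filter.1 hS).2))
      (fun S hS => Finset.erase_insert
        (notmem_of_shatters (mem_Sh.1 (Finset.mem_inter.1 hS).1) (fun A hA => notmem_F0 hA)))
  rw [Sh_union_filter, ← hsplit, h2]

lemma empty_mem_Sh {𝓕 : Finset (Finset (Fin n))} (h : 𝓕.Nonempty) : ∅ ∈ Sh 𝓕 := by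
  obtain ⟨F, hF⟩ := h
  exact mem_Sh.2 (fun T hT => ⟨F, hF, by rw [Finset.subset_empty.1 hT]; simp⟩)

lemma sup_empty_subset {𝓕 : Finset (Finset (Fin n))} (h : 𝓕.sup id = ∅) :
    𝓕 ⊆ {∅} := by
  intro A hA
  have : A ⊆ 𝓕.sup id := Finset.le_sup (f := id) hA
  rw [h] at this
  simp [Finset.subset_empty.1 this]

lemma measure_lt {𝓕 𝓖 : Finset (Finset (Fin n))} {a : Fin n} (ha : a ∈ 𝓕.sup id)
    (h : 𝓖.sup id ⊆ (𝓕.sup id).erase a) : (𝓖.sup id).card < (𝓕.sup id).card :=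
  lt_of_le_of_lt (Finset.card_le_card h) (Finset.card_erase_lt_of_mem ha)

lemma pajor_aux : ∀ k (𝓕 : Finset (Finset (Fin n))), (𝓕.sup id).card ≤ k →
    𝓕.card ≤ (Sh 𝓕).card := by
  intro k
  induction k with
  | zero =>
    intro 𝓕 h
    have hsub := sup_empty_subset (Finset.card_eq_zero.1 (Nat.le_zero.1 h))
    rcases Finset.eq_empty_or_nonempty 𝓕 with rfl | hne
    · simp
    · calc 𝓕.card ≤ ({∅} : Finset (Finset (Fin n))).card := Finset.card_le_card hsub
        _ = 1 := by simp
        _ ≤ (Sh 𝓕).card := Finset.card_pos.2 ⟨∅, empty_mem_Sh hne⟩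
  | succ k ih =>
    intro 𝓕 h
    rcases Finset.eq_empty_or_nonempty (𝓕.sup id) with hs | ⟨a, ha⟩
    · exact ih 𝓕 (by rw [hs]; simp)
    · have m0 : ((F0 𝓕 a).sup id).card ≤ k :=
        Nat.lt_succ_iff.1 (lt_of_lt_of_le (measure_lt ha (sup_F0_subset 𝓕 a)) h)
      have m1 : ((F1 𝓕 a).sup id).card ≤ k :=
        Nat.lt_succ_iff.1 (lt_of_lt_of_le (measure_lt ha (sup_F1_subset 𝓕 a)) h)
      have hsplit := sh_card_split 𝓕 a
      have hun : Sh (F0 𝓕 a) ∪ Sh (F1 𝓕 a) ⊆ Sh (F0 𝓕 a ∪ F1 𝓕 a) :=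
        Finset.union_subset (Sh_mono Finset.subset_union_left)
          (Sh_mono Finset.subset_union_right)
      have hcun : (Sh (F0 𝓕 a) ∪ Sh (F1 𝓕 a)).card ≤ (Sh (F0 𝓕 a ∪ F1 𝓕 a)).card :=
        Finset.card_le_card hun
      have hie : (Sh (F0 𝓕 a) ∪ Sh (F1 𝓕 a)).card + (Sh (F0 𝓕 a) ∩ Sh (F1 𝓕 a)).card
          = (Sh (F0 𝓕 a)).card + (Sh (F1 𝓕 a)).card :=
        Finset.card_union_add_card_inter _ _
      have i0 := ih (F0 𝓕 a) m0
      have i1 := ih (F1 𝓕 a) m1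
      have hc := card_F01 𝓕 a
      omega

lemma pajor (𝓕 : Finset (Finset (Fin n))) : 𝓕.card ≤ (Sh 𝓕).card :=
  pajor_aux _ 𝓕 le_rfl

lemma extremal_step {𝓕 : Finset (Finset (Fin n))} (a : Fin n) (h : Extremal 𝓕) :
    Extremal (F0 𝓕 a) ∧ Extremal (F1 𝓕 a) ∧ Extremal (F0 𝓕 a ∩ F1 𝓕 a) ∧
    Sh (F0 𝓕 a ∪ F1 𝓕 a) = Sh (F0 𝓕 a) ∪ Sh (F1 𝓕 a) ∧
    Sh (F0 𝓕 a ∩ F1 𝓕 a) = Sh (F0 𝓕 a) ∩ Sh (F1 𝓕 a) := by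
  have hsplit := sh_card_split 𝓕 a
  have hun : Sh (F0 𝓕 a) ∪ Sh (F1 𝓕 a) ⊆ Sh (F0 𝓕 a ∪ F1 𝓕 a) :=
    Finset.union_subset (Sh_mono Finset.subset_union_left)
      (Sh_mono Finset.subset_union_right)
  have hin : Sh (F0 𝓕 a ∩ F1 𝓕 a) ⊆ Sh (F0 𝓕 a) ∩ Sh (F1 𝓕 a) :=
    Finset.subset_inter (Sh_mono Finset.inter_subset_left)
      (Sh_mono Finset.inter_subset_right)
  have hcun := Finset.card_le_card hun
  have hcin := Finset.card_le_card hin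
  have hie : (Sh (F0 𝓕 a) ∪ Sh (F1 𝓕 a)).card + (Sh (F0 𝓕 a) ∩ Sh (F1 𝓕 a)).card
      = (Sh (F0 𝓕 a)).card + (Sh (F1 𝓕 a)).card :=
    Finset.card_union_add_card_inter _ _
  have hfe : (F0 𝓕 a ∪ F1 𝓕 a).card + (F0 𝓕 a ∩ F1 𝓕 a).card
      = (F0 𝓕 a).card + (F1 𝓕 a).card :=
    Finset.card_union_add_card_inter _ _
  have p0 := pajor (F0 𝓕 a)
  have p1 := pajor (F1 𝓕 a)
  have pu := pajor (F0 𝓕 a ∪ F1 𝓕 a)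
  have pi := pajor (F0 𝓕 a ∩ F1 𝓕 a)
  have hc := card_F01 𝓕 a
  have hext := h
  unfold Extremal at hext ⊢
  refine ⟨by omega, by omega, by omega, ?_, ?_⟩
  · exact (Finset.eq_of_subset_of_card_le hun (by omega)).symm
  · exact Finset.eq_of_subset_of_card_le hin (by omega)

lemma st_lift_F0 {𝓕 : Finset (Finset (Fin n))} {a S}
    (h : StronglyShatters (F0 𝓕 a) S) : StronglyShatters 𝓕 S := by
  obtain ⟨I, hI, hH⟩ := h
  exact ⟨I, hI, fun H hHS => (Finset.mem_filter.1 (hH H hHS)).1⟩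

lemma st_lift_F1 {𝓕 : Finset (Finset (Fin n))} {a S} (haS : a ∉ S)
    (h : StronglyShatters (F1 𝓕 a) S) : StronglyShatters 𝓕 S := by
  obtain ⟨I, hI, hH⟩ := h
  have haI : a ∉ I := by
    intro haI
    exact notmem_F1 (hH ∅ (Finset.empty_subset _)) (by simpa using haI)
  refine ⟨insert a I, ?_, ?_⟩
  · intro x hx
    rcases Finset.mem_insert.1 hx with rfl | hx'
    · simpa using haS
    · exact hI hx'
  · intro H hHS
    have := mem_F1.1 (hH H hHS)
    obtain ⟨A, hA, haA, hAe⟩ := this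
    have : H ∪ insert a I = A := by
      rw [Finset.union_insert, ← hAe, Finset.insert_erase haA]
    rwa [this]

lemma st_lift_inter {𝓕 : Finset (Finset (Fin n))} {a S} (haS : a ∉ S)
    (h : StronglyShatters (F0 𝓕 a ∩ F1 𝓕 a) S) :
    StronglyShatters 𝓕 (insert a S) := by
  obtain ⟨I, hI, hH⟩ := h
  have haI : a ∉ I := by
    intro haI
    have := hH ∅ (Finset.empty_subset _)
    rw [Finset.empty_union] at this
    exact notmem_F0 (Finset.mem_inter.1 this).1 haI
  refine ⟨I, ?_, ?_⟩
  · intro x hx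
    have hxS : x ∉ S := by simpa using hI hx
    have hxa : x ≠ a := by rintro rfl; exact haI hx
    simp [Finset.mem_insert, hxS, hxa]
  · intro H hHS
    by_cases haH : a ∈ H
    · have hsub : H.erase a ⊆ S := by
        intro x hx
        have := Finset.mem_erase.1 hx
        rcases Finset.mem_insert.1 (hHS this.2) with rfl | h2
        · exact absurd rfl this.1
        · exact h2
      have := (Finset.mem_inter.1 (hH (H.erase a) hsub)).2
      obtain ⟨A, hA, haA, hAe⟩ := mem_F1.1 this
      have : H ∪ I = A := by
        rw [← Finset.insert_erase haH, Finset.insert_union, ← hAe,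
          Finset.insert_erase haA]
      rwa [this]
    · have hsub : H ⊆ S := fun x hx => by
        rcases Finset.mem_insert.1 (hHS hx) with rfl | h2
        · exact absurd hx haH
        · exact h2
      exact (Finset.mem_filter.1 (Finset.mem_inter.1 (hH H hsub)).1).1

lemma st_subset_Sh (𝓕 : Finset (Finset (Fin n))) : st 𝓕 ⊆ Sh 𝓕 := by
  intro S hS
  obtain ⟨I, hI, hH⟩ := mem_st.1 hS
  refine mem_Sh.2 (fun T hT => ⟨T ∪ I, hH T hT, ?_⟩)
  ext x
  simp only [Finset.mem_inter, Finset.mem_union]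
  constructor
  · rintro ⟨(h1 | h1), h2⟩
    · exact h1
    · exact absurd h2 (by simpa using hI h1)
  · exact fun hx => ⟨Or.inl hx, hT hx⟩

lemma main_aux : ∀ k (𝓕 : Finset (Finset (Fin n))), (𝓕.sup id).card ≤ k →
    Extremal 𝓕 → Sh 𝓕 ⊆ st 𝓕 := by
  intro k
  induction k with
  | zero =>
    intro 𝓕 h _ S hS
    have hsub := sup_empty_subset (Finset.card_eq_zero.1 (Nat.le_zero.1 h))
    obtain ⟨F, hF, hSF⟩ := exists_superset_of_shatters (mem_Sh.1 hS)
    have hF0 : F = ∅ := Finset.mem_singleton.1 (hsub hF)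
    have hS0 : S = ∅ := Finset.subset_empty.1 (hF0 ▸ hSF)
    subst hS0
    refine mem_st.2 ⟨∅, Finset.empty_subset _, fun H hH => ?_⟩
    rw [Finset.subset_empty.1 hH, Finset.empty_union]
    rwa [← hF0]
  | succ k ih =>
    intro 𝓕 h hext S hS
    rcases Finset.eq_empty_or_nonempty (𝓕.sup id) with hs | ⟨a, ha⟩
    · exact ih 𝓕 (by rw [hs]; simp) hext hS
    · have m0 : ((F0 𝓕 a).sup id).card ≤ k :=
        Nat.lt_succ_iff.1 (lt_of_lt_of_le (measure_lt ha (sup_F0_subset 𝓕 a)) h)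
      have m1 : ((F1 𝓕 a).sup id).card ≤ k :=
        Nat.lt_succ_iff.1 (lt_of_lt_of_le (measure_lt ha (sup_F1_subset 𝓕 a)) h)
      have mi : ((F0 𝓕 a ∩ F1 𝓕 a).sup id).card ≤ k := by
        refine le_trans (Finset.card_le_card (Finset.sup_mono Finset.inter_subset_left)) m0
      obtain ⟨e0, e1, ei, hu, hi⟩ := extremal_step a hext
      by_cases haS : a ∈ S
      · have hsh : _root_.Shatters 𝓕 (insert a (S.erase a)) := by
          rw [Finset.insert_erase haS]; exact mem_Sh.1 hS
        have h2 := (shatters_insert_iff (Finset.notMem_erase a S)).1 hsh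
        have hmem : S.erase a ∈ Sh (F0 𝓕 a ∩ F1 𝓕 a) := by
          rw [hi]; exact Finset.mem_inter.2 ⟨mem_Sh.2 h2.1, mem_Sh.2 h2.2⟩
        have := ih (F0 𝓕 a ∩ F1 𝓕 a) mi ei hmem
        have := st_lift_inter (Finset.notMem_erase a S) (mem_st.1 this)
        rw [Finset.insert_erase haS] at this
        exact mem_st.2 this
      · have hmem : S ∈ Sh (F0 𝓕 a ∪ F1 𝓕 a) :=
          mem_Sh.2 ((shatters_union_iff haS).1 (mem_Sh.1 hS))
        rw [hu] at hmem
        rcases Finset.mem_union.1 hmem with h0 | h1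
        · exact mem_st.2 (st_lift_F0 (mem_st.1 (ih (F0 𝓕 a) m0 e0 h0)))
        · exact mem_st.2 (st_lift_F1 haS (mem_st.1 (ih (F1 𝓕 a) m1 e1 h1)))


/-- For a shattering-extremal family the strongly shattered sets coincide with the
shattered sets. -/
theorem st_eq_Sh_of_extremal (n : ℕ) (𝓕 : Finset (Finset (Fin n)))
    (h : Extremal 𝓕) : st 𝓕 = Sh 𝓕 := by
  exact Finset.Subset.antisymm (st_subset_Sh 𝓕) (main_aux _ 𝓕 le_rfl h)
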